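/- Let G = G₁ * G₂ be a free product of two nontrivial groups. Then the group of outer automorphisms of G that restrict to an inner automorphism on each of G₁ and G₂ (up to conjugacy preserving each factor) is isomorphic to (G₁/Z(G₁)) × (G₂/Z(G₂)), where Z denotes the center. -/

import Mathlib

open Monoid

variable (G₁ G₂ : Type u) [Group G₁] [Group G₂]

/-- The subgroup of `Aut(G₁ ∗ G₂)` consisting of automorphisms whose restriction to each
free factor coincides with the conjugation by some element of `G₁ ∗ G₂`. Its image in
`Out(G₁ ∗ G₂)` is the group `Out(G₁ ∗ G₂, {[G₁], [G₂]}^(t))`. -/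
def conjRestrictingAuts : Subgroup (MulAut (Coprod G₁ G₂)) where
  carrier := {φ | (∃ a, ∀ x : G₁, φ (Coprod.inl x) = a * Coprod.inl x * a⁻¹) ∧
                  (∃ b, ∀ y : G₂, φ (Coprod.inr y) = b * Coprod.inr y * b⁻¹)}
  one_mem' := ⟨⟨1, by simp⟩, ⟨1, by simp⟩⟩
  mul_mem' := by
    rintro φ ψ ⟨⟨a, ha⟩, ⟨b, hb⟩⟩ ⟨⟨a', ha'⟩, ⟨b', hb'⟩⟩
    constructor
    · exact ⟨φ a' * a, fun x => by
        simp only [MulAut.mul_apply, ha' x, map_mul, map_inv, ha x, mul_assoc, mul_inv_rev]⟩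
    · exact ⟨φ b' * b, fun y => by
        simp only [MulAut.mul_apply, hb' y, map_mul, map_inv, hb y, mul_assoc, mul_inv_rev]⟩
  inv_mem' := by
    rintro φ ⟨⟨a, ha⟩, ⟨b, hb⟩⟩
    constructor
    · refine ⟨(φ⁻¹ a)⁻¹, fun x => ?_⟩
      apply φ.injective
      simp only [MulAut.apply_inv_self, map_mul, map_inv, inv_inv, ha x]
      group
    · refine ⟨(φ⁻¹ b)⁻¹, fun y => ?_⟩
      apply φ.injective
      simp only [MulAut.apply_inv_self, map_mul, map_inv, inv_inv, hb y]
      group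

/-- The subgroup of inner automorphisms. -/
def innAuts (G : Type u) [Group G] : Subgroup (MulAut G) := (MulAut.conj (G := G)).range

instance innAuts_normal (G : Type u) [Group G] : (innAuts G).Normal := by
  constructor
  rintro n ⟨g, rfl⟩ φ
  exact ⟨φ g, by ext x; simp [MulAut.conj]⟩

universe u

namespace OutAux

open Monoid.CoprodI

set_option linter.unusedSectionVars false

variable {H : Bool → Type u} [∀ b, Group (H b)] [∀ b, DecidableEq (H b)]

/-- index of first letter of reduced word -/
def fiIdx (g : CoprodI H) : Option Bool := (Word.equiv g).fstIdx

/-- length of reduced word -/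
def lenW (g : CoprodI H) : ℕ := (Word.equiv g).toList.length

theorem equiv_prod (w : Word H) : Word.equiv w.prod = w :=
  Word.equiv.apply_symm_apply w

theorem prod_equiv (g : CoprodI H) : (Word.equiv g).prod = g :=
  Word.equiv.symm_apply_apply g

theorem equiv_one : Word.equiv (1 : CoprodI H) = Word.empty := by
  rw [← Word.prod_empty, equiv_prod]

theorem eq_one_of_equiv_empty (g : CoprodI H) (h : Word.equiv g = Word.empty) : g = 1 := by
  have := prod_equiv g
  rw [h, Word.prod_empty] at this
  exact this.symm

theorem fiIdx_eq_none_iff {g : CoprodI H} : fiIdx g = none ↔ g = 1 := by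
  constructor
  · intro h
    apply eq_one_of_equiv_empty
    have : (Word.equiv g).toList = [] := by
      rcases hl : (Word.equiv g).toList with _ | ⟨a, l⟩
      · rfl
      · exfalso
        simp only [fiIdx, Word.fstIdx, hl] at h
        simp at h
    ext1
    rw [this]
    rfl
  · rintro rfl
    rw [fiIdx, equiv_one]
    rfl

theorem equiv_of_mul {i : Bool} {x : H i} (hx : x ≠ 1) {g : CoprodI H}
    (hg : fiIdx g ≠ some i) :
    Word.equiv (CoprodI.of x * g) = Word.cons x (Word.equiv g) hg hx := by
  have h0 : ∀ h : CoprodI H, Word.equiv h = h • Word.empty := fun _ => rfl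
  have h1 : Word.equiv (CoprodI.of x * g) = CoprodI.of x • Word.equiv g := by
    rw [h0, mul_smul, ← h0]
  rw [h1, ← Word.cons_eq_smul]
  exacts [hg, hx]

theorem fiIdx_of_mul {i : Bool} {x : H i} (hx : x ≠ 1) {g : CoprodI H}
    (hg : fiIdx g ≠ some i) : fiIdx (CoprodI.of x * g) = some i := by
  rw [fiIdx, equiv_of_mul hx hg]
  exact Word.fstIdx_cons _ _ _ _

theorem lenW_of_mul {i : Bool} {x : H i} (hx : x ≠ 1) {g : CoprodI H}
    (hg : fiIdx g ≠ some i) : lenW (CoprodI.of x * g) = lenW g + 1 := by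
  rw [lenW, equiv_of_mul hx hg]
  simp [Word.cons, lenW]

theorem exists_decomp {i : Bool} {g : CoprodI H} (hg : fiIdx g = some i) :
    ∃ (h : H i) (t : CoprodI H), h ≠ 1 ∧ g = CoprodI.of h * t ∧ fiIdx t ≠ some i ∧
      lenW g = lenW t + 1 := by
  classical
  set w := Word.equiv g with hw
  set p := Word.equivPair i w with hp
  have hrcons : Word.rcons p = w := by
    rw [hp, ← Word.equivPair_symm, Equiv.symm_apply_apply]
  have hhead : p.head ≠ 1 := by
    intro h1
    have : w = p.tail := by
      rw [← hrcons, Word.rcons, dif_pos h1]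
    have h2 : Word.fstIdx w ≠ some i := this ▸ p.fstIdx_ne
    exact h2 hg
  refine ⟨p.head, p.tail.prod, hhead, ?_, ?_, ?_⟩
  · calc g = w.prod := (prod_equiv g).symm
      _ = (Word.rcons p).prod := by rw [hrcons]
      _ = CoprodI.of p.head * p.tail.prod := Word.prod_rcons p
  · rw [fiIdx, equiv_prod]
    exact p.fstIdx_ne
  · rw [lenW, lenW, equiv_prod, ← hw, ← hrcons, Word.rcons, dif_neg hhead]
    simp [Word.cons]

theorem NeWord_inv_length {i j : Bool} (u : NeWord H i j) :
    u.inv.toList.length = u.toList.length := by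
  induction u with
  | singleton x hx => rfl
  | append u₁ hne u₂ ih₁ ih₂ =>
    simp only [NeWord.inv, NeWord.toList, List.length_append, ih₁, ih₂]
    omega

theorem lenW_inv (g : CoprodI H) : lenW g⁻¹ = lenW g := by
  by_cases hg : g = 1
  · subst hg; simp
  · have hne : Word.equiv g ≠ Word.empty := fun h => hg (eq_one_of_equiv_empty g h)
    obtain ⟨a, b, u, hu⟩ := NeWord.of_word (Word.equiv g) hne
    have hprod : u.prod = g := by
      rw [NeWord.prod, hu, prod_equiv]
    have h2 : Word.equiv g⁻¹ = u.inv.toWord := by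
      rw [← equiv_prod u.inv.toWord]
      congr 1
      rw [← NeWord.prod, NeWord.inv_prod, hprod]
    rw [lenW, lenW, h2, ← hu]
    exact NeWord_inv_length u

theorem bool_opt (o : Option Bool) {i j : Bool} (hij : i ≠ j) :
    o = none ∨ o = some i ∨ o = some j := by
  rcases o with _ | b
  · exact Or.inl rfl
  · right
    rcases Bool.eq_or_eq_not b i with rfl | rfl
    · exact Or.inl rfl
    · right
      congr 1
      revert hij; cases i <;> cases j <;> simp

theorem of_ne_one {i : Bool} {x : H i} (hx : x ≠ 1) : CoprodI.of x ≠ 1 := by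
  intro h
  exact hx (CoprodI.of_injective i (by rw [h, map_one]))

theorem fiIdx_of {i : Bool} {x : H i} (hx : x ≠ 1) : fiIdx (CoprodI.of x) = some i := by
  have := fiIdx_of_mul (H := H) hx (g := 1) (by rw [fiIdx_eq_none_iff.2 rfl]; simp)
  rwa [mul_one] at this


theorem fiIdx_mul_of : ∀ (n : ℕ) (g : CoprodI H), lenW g ≤ n → ∀ {i j : Bool}, i ≠ j →
    ∀ (x : H i),
    (fiIdx g = some j → fiIdx (g * CoprodI.of x) = some j) ∧
    (fiIdx g ≠ some j → fiIdx (g * CoprodI.of x) ≠ some j) := by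
  intro n
  induction n with
  | zero =>
    intro g hg i j hij x
    have hg1 : g = 1 := by
      apply eq_one_of_equiv_empty
      ext1
      have : (Word.equiv g).toList.length = 0 := Nat.le_zero.mp hg
      simpa using List.length_eq_zero_iff.mp this
    subst hg1
    rw [fiIdx_eq_none_iff.2 rfl]
    constructor
    · intro h; exact absurd h (by simp)
    · intro _
      rw [one_mul]
      by_cases hx : x = 1
      · subst hx; rw [map_one, fiIdx_eq_none_iff.2 rfl]; simp
      · rw [fiIdx_of hx]; simp [hij]
  | succ n ih =>
    intro g hg i j hij x
    rcases bool_opt (fiIdx g) hij with hnone | hi | hj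
    · -- g = 1
      have hg1 : g = 1 := fiIdx_eq_none_iff.mp hnone
      subst hg1
      constructor
      · intro h; rw [hnone] at h; exact absurd h (by simp)
      · intro _
        rw [one_mul]
        by_cases hx : x = 1
        · subst hx; rw [map_one, fiIdx_eq_none_iff.2 rfl]; simp
        · rw [fiIdx_of hx]; simp [hij]
    · -- fiIdx g = some i
      constructor
      · intro h; rw [hi] at h; simp at h; exact absurd h hij
      · intro _
        obtain ⟨h, t, hh, rfl, ht, hlen⟩ := exists_decomp hi
        have hlt : lenW t ≤ n := by omega
        rw [mul_assoc]
        rcases bool_opt (fiIdx t) hij with htnone | hti | htj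
        · -- t = 1
          rw [fiIdx_eq_none_iff.mp htnone, one_mul, ← map_mul]
          by_cases hhx : h * x = 1
          · rw [hhx, map_one, fiIdx_eq_none_iff.2 rfl]
            simp
          · have : fiIdx (CoprodI.of (h * x) * 1) = some i :=
              fiIdx_of_mul hhx (by rw [fiIdx_eq_none_iff.2 rfl]; simp)
            rw [mul_one] at this
            rw [this]; simp [hij]
        · exact absurd hti ht
        · have h1 : fiIdx (t * CoprodI.of x) = some j := ((ih t hlt hij x).1) htj
          have h2 : fiIdx (CoprodI.of h * (t * CoprodI.of x)) = some i :=
            fiIdx_of_mul hh (by rw [h1]; simp [Ne.symm hij])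
          rw [h2]; simp [hij]
    · -- fiIdx g = some j
      constructor
      · intro _
        obtain ⟨h, t, hh, rfl, ht, hlen⟩ := exists_decomp hj
        have hlt : lenW t ≤ n := by omega
        have h1 : fiIdx (t * CoprodI.of x) ≠ some j := ((ih t hlt hij x).2) ht
        rw [mul_assoc]
        exact fiIdx_of_mul hh h1
      · intro h; exact absurd hj h

/-- Elements whose conjugation action maps `of (H i)` into itself (twisted) lie in `of (H i)`. -/
theorem mem_of_of_conj {i j : Bool} (hij : i ≠ j) (hnt : ∃ x : H i, x ≠ 1) :
    ∀ (n : ℕ) (w : CoprodI H), lenW w ≤ n →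
    (∀ x : H i, ∃ x' : H i, w * CoprodI.of x = CoprodI.of x' * w) →
    ∃ u : H i, w = CoprodI.of u := by
  intro n
  induction n with
  | zero =>
    intro w hw _
    have : w = 1 := by
      apply eq_one_of_equiv_empty
      ext1
      simpa using List.length_eq_zero_iff.mp (Nat.le_zero.mp hw)
    exact ⟨1, by rw [this, map_one]⟩
  | succ n ih =>
    intro w hw hcomm
    rcases bool_opt (fiIdx w) hij with hnone | hi | hj
    · exact ⟨1, by rw [fiIdx_eq_none_iff.mp hnone, map_one]⟩
    · obtain ⟨h, t, hh, rfl, ht, hlen⟩ := exists_decomp hi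
      have hlt : lenW t ≤ n := by omega
      have hcomm' : ∀ x : H i, ∃ x' : H i, t * CoprodI.of x = CoprodI.of x' * t := by
        intro x
        obtain ⟨x', hx'⟩ := hcomm x
        refine ⟨h⁻¹ * x' * h, ?_⟩
        have : CoprodI.of h * (t * CoprodI.of x) = CoprodI.of h * (CoprodI.of (h⁻¹ * x' * h) * t) := by
          rw [← mul_assoc, hx']
          simp only [map_mul, map_inv]
          group
        exact mul_left_cancel this
      obtain ⟨u, hu⟩ := ih t hlt hcomm'
      exact ⟨h * u, by rw [hu, map_mul]⟩
    · exfalso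
      -- w starts with a j-letter: contradiction
      obtain ⟨x, hx⟩ := hnt
      obtain ⟨x', hx'⟩ := hcomm x
      have hx'1 : x' ≠ 1 := by
        intro h1
        rw [h1, map_one, one_mul] at hx'
        have h2 : CoprodI.of x = 1 := mul_left_cancel (a := w) (by rw [hx', mul_one])
        rw [← map_one (CoprodI.of (i := i) (M := H))] at h2
        exact hx (CoprodI.of_injective i h2)
      have h1 : fiIdx (w * CoprodI.of x) = some j :=
        (fiIdx_mul_of (lenW w) w le_rfl hij x).1 hj
      have h2 : fiIdx (CoprodI.of x' * w) = some i :=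
        fiIdx_of_mul hx'1 (by rw [hj]; simp [Ne.symm hij])
      rw [hx', h2] at h1
      simp at h1
      exact hij h1


/-- The endomorphism fixing the `true` factor and conjugating the `false` factor by `c`. -/
def psiC (c : CoprodI H) : CoprodI H →* CoprodI H :=
  CoprodI.lift (fun b => Bool.rec ((MulAut.conj c).toMonoidHom.comp CoprodI.of) CoprodI.of b)

@[simp] theorem psiC_of_true (c : CoprodI H) (x : H true) :
    psiC c (CoprodI.of x) = CoprodI.of x := by
  rw [psiC, CoprodI.lift_of]

@[simp] theorem psiC_of_false (c : CoprodI H) (y : H false) :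
    psiC c (CoprodI.of y) = c * CoprodI.of y * c⁻¹ := by
  rw [psiC, CoprodI.lift_of]
  rfl

/-- Applying `psiC c` to a nonempty reduced word, as a reduced word, when the reduced
word of `c` starts with a `false`-letter and ends with a `true`-letter. -/
def psiWord (cNe : NeWord H false true) : ∀ {a b : Bool}, NeWord H a b → NeWord H a b
  | _, _, NeWord.singleton (i := i) x hx =>
    match i, x, hx with
    | true, x, hx => NeWord.singleton x hx
    | false, x, hx =>
      NeWord.append (NeWord.append cNe (by simp) (NeWord.singleton x hx)) (by simp) cNe.inv
  | _, _, NeWord.append u₁ hne u₂ => NeWord.append (psiWord cNe u₁) hne (psiWord cNe u₂)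

theorem psiWord_prod (cNe : NeWord H false true) :
    ∀ {a b : Bool} (v : NeWord H a b), (psiWord cNe v).prod = psiC cNe.prod v.prod := by
  intro a b v
  induction v with
  | singleton x hx =>
    rename_i i
    cases i
    · show (NeWord.append (NeWord.append cNe _ (NeWord.singleton x hx)) _ cNe.inv).prod = _
      rw [NeWord.append_prod, NeWord.append_prod, NeWord.inv_prod, NeWord.prod_singleton,
        psiC_of_false]
    · show (NeWord.singleton x hx).prod = _
      rw [NeWord.prod_singleton, psiC_of_true]
  | append u₁ hne u₂ ih₁ ih₂ =>
    show (NeWord.append (psiWord cNe u₁) hne (psiWord cNe u₂)).prod = _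
    rw [NeWord.append_prod, ih₁, ih₂, NeWord.append_prod, map_mul]

theorem psiWord_length (cNe : NeWord H false true) :
    ∀ {a b : Bool} (v : NeWord H a b), a = false → 2 ≤ (psiWord cNe v).toList.length := by
  intro a b v
  induction v with
  | singleton x hx =>
    rename_i i
    cases i
    · intro _
      show 2 ≤ (NeWord.append (NeWord.append cNe _ (NeWord.singleton x hx)) _ cNe.inv).toList.length
      simp only [NeWord.toList, List.length_append, List.length_singleton]
      have h1 : cNe.toList.length ≠ 0 := fun h => cNe.toList_ne_nil (List.length_eq_zero_iff.mp h)
      omega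
    · intro h; exact absurd h (by simp)
  | append u₁ hne u₂ ih₁ ih₂ =>
    intro ha
    show 2 ≤ (NeWord.append (psiWord cNe u₁) hne (psiWord cNe u₂)).toList.length
    simp only [NeWord.toList, List.length_append]
    have h1 := ih₁ ha
    omega


theorem fiIdx_eq_of_neword (u : NeWord H i j) : fiIdx u.prod = some i := by
  rw [fiIdx, NeWord.prod, equiv_prod]
  show (u.toWord.toList.head?).map Sigma.fst = some i
  rw [show u.toWord.toList = u.toList from rfl, NeWord.toList_head?]
  rfl

theorem conj_decomp (hnt : ∃ y : H false, y ≠ 1) :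
    ∀ (n : ℕ) (c : CoprodI H), lenW c ≤ n → Function.Surjective (psiC c) →
    ∃ (g₁ : H true) (g₂ : H false), ∀ y : H false,
      c * CoprodI.of y * c⁻¹ =
        (CoprodI.of g₁ * CoprodI.of g₂) * CoprodI.of y * (CoprodI.of g₁ * CoprodI.of g₂)⁻¹ := by
  intro n
  induction n with
  | zero =>
    intro c hc _
    have hc1 : c = 1 := by
      apply eq_one_of_equiv_empty
      ext1
      simpa using List.length_eq_zero_iff.mp (Nat.le_zero.mp hc)
    subst hc1
    exact ⟨1, 1, fun y => by simp⟩
  | succ n ih =>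
    intro c hc hsurj
    by_cases hc1 : c = 1
    · subst hc1; exact ⟨1, 1, fun y => by simp⟩
    have hcne : fiIdx c ≠ none := fun h => hc1 (fiIdx_eq_none_iff.mp h)
    rcases bool_opt (fiIdx c) (by decide : (true:Bool) ≠ false) with h | hct | hcf
    · exact absurd h hcne
    · -- c = of h * t with h : H true
      obtain ⟨h, t, hh, hdec, ht, hlen⟩ := exists_decomp hct
      set ρ : CoprodI H →* CoprodI H :=
        CoprodI.lift (fun b => Bool.rec CoprodI.of
          (CoprodI.of.comp (MulAut.conj h⁻¹).toMonoidHom) b) with hρ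
      have hρt : ∀ x : H true, ρ (CoprodI.of x) = CoprodI.of (h⁻¹ * x * h) := by
        intro x
        rw [hρ, CoprodI.lift_of]
        show CoprodI.of (h⁻¹ * x * h⁻¹⁻¹) = _
        rw [inv_inv]
      have hρf : ∀ y : H false, ρ (CoprodI.of y) = CoprodI.of y := by
        intro y
        rw [hρ, CoprodI.lift_of]
      have hkey : ∀ g, psiC t (ρ g) =
          CoprodI.of h⁻¹ * psiC c g * CoprodI.of h := by
        intro g
        induction g using CoprodI.induction_on with
        | one => simp
        | of i z =>
          cases i
          · rw [hρf, psiC_of_false, psiC_of_false, hdec]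
            simp only [map_mul, map_inv, mul_inv_rev]
            group
          · rw [hρt, psiC_of_true, psiC_of_true]
            simp only [map_mul, map_inv]
        | mul x y hx hy =>
          rw [map_mul, map_mul, hx, hy, map_mul]
          simp only [map_inv]
          group

      have hsurj' : Function.Surjective (psiC t) := by
        intro g
        obtain ⟨w, hw⟩ := hsurj (CoprodI.of h * g * CoprodI.of h⁻¹)
        refine ⟨ρ w, ?_⟩
        rw [hkey, hw]
        simp only [map_inv]
        group
      obtain ⟨g₁, g₂, hg⟩ := ih t (by omega) hsurj'
      refine ⟨h * g₁, g₂, fun y => ?_⟩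
      have := hg y
      rw [hdec]
      simp only [map_mul, map_inv, mul_inv_rev] at this ⊢
      calc CoprodI.of h * t * CoprodI.of y * (t⁻¹ * (CoprodI.of h)⁻¹)
          = CoprodI.of h * (t * CoprodI.of y * t⁻¹) * (CoprodI.of h)⁻¹ := by group
        _ = CoprodI.of h * (CoprodI.of g₁ * CoprodI.of g₂ * CoprodI.of y *
              ((CoprodI.of g₂)⁻¹ * (CoprodI.of g₁)⁻¹)) * (CoprodI.of h)⁻¹ := by rw [this]
        _ = _ := by group
    · -- fiIdx c = some false
      have hcne' : fiIdx c⁻¹ ≠ none := fun hx =>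
        hc1 (by rw [← inv_inv c, fiIdx_eq_none_iff.mp hx, inv_one])
      rcases bool_opt (fiIdx c⁻¹) (by decide : (true:Bool) ≠ false) with h | hct' | hcf'
      · exact absurd h hcne'
      · -- hard case : c starts with false letter, ends with true letter
        exfalso
        obtain ⟨y₀, hy₀⟩ := hnt
        obtain ⟨g, hg⟩ := hsurj (CoprodI.of y₀)
        have hgne : g ≠ 1 := by
          rintro rfl
          rw [map_one] at hg
          exact of_ne_one hy₀ hg.symm
        have hcw : Word.equiv c ≠ Word.empty := fun hx => hc1 (eq_one_of_equiv_empty c hx)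
        obtain ⟨a, b, u, hu⟩ := NeWord.of_word _ hcw
        have huprod : u.prod = c := by rw [NeWord.prod, hu, prod_equiv]
        have ha : a = false := by
          have h1 : fiIdx c = some a := by rw [← huprod]; exact fiIdx_eq_of_neword u
          rw [h1] at hcf
          exact (Option.some_inj.mp hcf)
        have hb : b = true := by
          have h1 : fiIdx c⁻¹ = some b := by
            rw [← huprod, ← NeWord.inv_prod]
            exact fiIdx_eq_of_neword u.inv
          rw [h1] at hct'
          exact (Option.some_inj.mp hct')
        subst ha hb
        have hgw : Word.equiv g ≠ Word.empty := fun hx => hgne (eq_one_of_equiv_empty g hx)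
        obtain ⟨a', b', v, hv⟩ := NeWord.of_word _ hgw
        have hvprod : v.prod = g := by rw [NeWord.prod, hv, prod_equiv]
        have h2 : (psiWord u v).prod = CoprodI.of y₀ := by
          rw [psiWord_prod, huprod, hvprod, hg]
        have h3 : Word.equiv (CoprodI.of y₀ : CoprodI H) = (psiWord u v).toWord := by
          rw [← h2, NeWord.prod, equiv_prod]
        have h4 : (Word.equiv (CoprodI.of y₀ : CoprodI H)).toList = [⟨false, y₀⟩] := by
          have h5 := equiv_of_mul hy₀ (g := (1 : CoprodI H))
            (by rw [fiIdx_eq_none_iff.2 rfl]; simp)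
          rw [mul_one] at h5
          rw [h5]
          show (⟨false, y₀⟩ : Σ i, H i) :: (Word.equiv (1 : CoprodI H)).toList = _
          rw [equiv_one]
          rfl
        have h6 : (psiWord u v).toList = [⟨false, y₀⟩] := by
          rw [show (psiWord u v).toList = (psiWord u v).toWord.toList from rfl, ← h3, h4]
        have ha' : a' = false := by
          have h7 := NeWord.toList_head? (psiWord u v)
          rw [h6] at h7
          simp only [List.head?_cons, Option.some_inj] at h7
          exact (Sigma.mk.inj_iff.mp h7).1.symm
        have h8 := psiWord_length u v ha'
        rw [h6] at h8
        simp at h8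
      · -- c ends with a false letter
        obtain ⟨k, s, hk, hdec, hs, hlen⟩ := exists_decomp hcf'
        have hcs : c = s⁻¹ * CoprodI.of k⁻¹ := by
          rw [← inv_inv c, hdec]
          simp [mul_comm]
        set ρ₂ : CoprodI H →* CoprodI H :=
          CoprodI.lift (fun b => Bool.rec (CoprodI.of.comp (MulAut.conj k⁻¹).toMonoidHom)
            CoprodI.of b) with hρ₂
        have hρt : ∀ x : H true, ρ₂ (CoprodI.of x) = CoprodI.of x := by
          intro x; rw [hρ₂, CoprodI.lift_of]
        have hρf : ∀ y : H false, ρ₂ (CoprodI.of y) = CoprodI.of (k⁻¹ * y * k) := by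
          intro y
          rw [hρ₂, CoprodI.lift_of]
          show CoprodI.of (k⁻¹ * y * k⁻¹⁻¹) = _
          rw [inv_inv]
        have hkey : ∀ g, psiC s⁻¹ (ρ₂ g) = psiC c g := by
          intro g
          induction g using CoprodI.induction_on with
          | one => simp
          | of i z =>
            cases i
            · rw [hρf, psiC_of_false, psiC_of_false, hcs]
              simp only [map_mul, map_inv, mul_inv_rev, inv_inv]
              group
            · rw [hρt, psiC_of_true, psiC_of_true]
          | mul x y hx hy => rw [map_mul, map_mul, hx, hy, map_mul]
        have hsurj' : Function.Surjective (psiC s⁻¹) := by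
          intro g
          obtain ⟨w, hw⟩ := hsurj g
          exact ⟨ρ₂ w, by rw [hkey, hw]⟩
        have hlen' : lenW s⁻¹ ≤ n := by
          have e1 := lenW_inv (H := H) c
          have e2 := lenW_inv (H := H) s
          omega
        obtain ⟨g₁, g₂, hg⟩ := ih s⁻¹ hlen' hsurj'
        refine ⟨g₁, g₂ * k⁻¹, fun y => ?_⟩
        have := hg (k⁻¹ * y * k)
        rw [inv_inv] at this
        rw [hcs]
        simp only [map_mul, map_inv, mul_inv_rev, inv_inv] at this
        have hA : s⁻¹ * CoprodI.of k⁻¹ * CoprodI.of y * (s⁻¹ * CoprodI.of k⁻¹)⁻¹ =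
            s⁻¹ * ((CoprodI.of k)⁻¹ * CoprodI.of y * CoprodI.of k) * s := by
          simp only [map_inv, mul_inv_rev, inv_inv]
          group
        rw [hA, this]
        simp only [map_mul, map_inv, mul_inv_rev]
        group


section Main

/-- The two-factor family. -/
abbrev Hf : Bool → Type u := fun b => cond b G₁ G₂

instance instHfGroup : ∀ b, Group (Hf G₁ G₂ b)
  | true => inferInstanceAs (Group G₁)
  | false => inferInstanceAs (Group G₂)

def toI : Coprod G₁ G₂ →* CoprodI (Hf G₁ G₂) :=
  Coprod.lift (CoprodI.of (M := Hf G₁ G₂) (i := true)) (CoprodI.of (M := Hf G₁ G₂) (i := false))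

def fromI : CoprodI (Hf G₁ G₂) →* Coprod G₁ G₂ :=
  CoprodI.lift (fun b => Bool.rec (motive := fun b => Hf G₁ G₂ b →* Coprod G₁ G₂)
    Coprod.inr Coprod.inl b)

theorem fromI_of_true (x : G₁) :
    fromI G₁ G₂ (CoprodI.of (M := Hf G₁ G₂) (i := true) x) = Coprod.inl x := by
  rw [fromI, CoprodI.lift_of]

theorem fromI_of_false (y : G₂) :
    fromI G₁ G₂ (CoprodI.of (M := Hf G₁ G₂) (i := false) y) = Coprod.inr y := by
  rw [fromI, CoprodI.lift_of]

theorem toI_inl (x : G₁) : toI G₁ G₂ (Coprod.inl x) = CoprodI.of (M := Hf G₁ G₂) (i := true) x := by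
  rw [toI, Coprod.lift_apply_inl]

theorem toI_inr (y : G₂) : toI G₁ G₂ (Coprod.inr y) = CoprodI.of (M := Hf G₁ G₂) (i := false) y := by
  rw [toI, Coprod.lift_apply_inr]

def eIso : Coprod G₁ G₂ ≃* CoprodI (Hf G₁ G₂) :=
  MonoidHom.toMulEquiv (toI G₁ G₂) (fromI G₁ G₂)
    (by
      apply Coprod.hom_ext <;> ext x <;>
        simp only [MonoidHom.comp_apply, MonoidHom.id_comp, toI_inl, toI_inr,
          fromI_of_true, fromI_of_false])
    (by
      apply CoprodI.ext_hom
      intro b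
      cases b <;> ext x <;>
        simp only [MonoidHom.comp_apply, MonoidHom.id_apply, toI_inl, toI_inr,
          fromI_of_true, fromI_of_false])

@[simp] theorem eIso_inl (x : G₁) :
    eIso G₁ G₂ (Coprod.inl x) = CoprodI.of (M := Hf G₁ G₂) (i := true) x := toI_inl G₁ G₂ x

@[simp] theorem eIso_inr (y : G₂) :
    eIso G₁ G₂ (Coprod.inr y) = CoprodI.of (M := Hf G₁ G₂) (i := false) y := toI_inr G₁ G₂ y

@[simp] theorem eIso_symm_of_true (x : G₁) :
    (eIso G₁ G₂).symm (CoprodI.of (M := Hf G₁ G₂) (i := true) x) = Coprod.inl x :=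
  fromI_of_true G₁ G₂ x

@[simp] theorem eIso_symm_of_false (y : G₂) :
    (eIso G₁ G₂).symm (CoprodI.of (M := Hf G₁ G₂) (i := false) y) = Coprod.inr y :=
  fromI_of_false G₁ G₂ y

variable {G₁ G₂}

/-- `(a, b)` acting by conjugation on each factor, as an endomorphism. -/
def bihom (a : G₁) (b : G₂) : Coprod G₁ G₂ →* Coprod G₁ G₂ :=
  Coprod.lift (Coprod.inl.comp (MulAut.conj a).toMonoidHom)
    (Coprod.inr.comp (MulAut.conj b).toMonoidHom)

@[simp] theorem bihom_inl (a : G₁) (b : G₂) (x : G₁) :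
    bihom a b (Coprod.inl x) = Coprod.inl (a * x * a⁻¹) := by
  simp [bihom, MulAut.conj_apply]

@[simp] theorem bihom_inr (a : G₁) (b : G₂) (y : G₂) :
    bihom a b (Coprod.inr y) = Coprod.inr (b * y * b⁻¹) := by
  simp [bihom, MulAut.conj_apply]

theorem bihom_comp (a a' : G₁) (b b' : G₂) :
    (bihom a b).comp (bihom a' b') = bihom (a * a') (b * b') := by
  apply Coprod.hom_ext <;> ext z <;>
    simp [mul_assoc]

theorem bihom_id : bihom (1 : G₁) (1 : G₂) = MonoidHom.id _ := by
  apply Coprod.hom_ext <;> ext z <;> simp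

/-- `(a, b)` acting by conjugation on each factor, as an automorphism. -/
def theta (a : G₁) (b : G₂) : MulAut (Coprod G₁ G₂) :=
  MonoidHom.toMulEquiv (bihom a b) (bihom a⁻¹ b⁻¹)
    (by rw [bihom_comp]; simp [bihom_id])
    (by rw [bihom_comp]; simp [bihom_id])

@[simp] theorem theta_inl (a : G₁) (b : G₂) (x : G₁) :
    theta a b (Coprod.inl x) = Coprod.inl (a * x * a⁻¹) :=
  bihom_inl a b x

@[simp] theorem theta_inr (a : G₁) (b : G₂) (y : G₂) :
    theta a b (Coprod.inr y) = Coprod.inr (b * y * b⁻¹) :=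
  bihom_inr a b y


/-- The canonical map `G₁ × G₂ → conjRestrictingAuts`. -/
def Phi0 : G₁ × G₂ →* conjRestrictingAuts G₁ G₂ where
  toFun p := ⟨theta p.1 p.2,
    ⟨⟨Coprod.inl p.1, fun x => by rw [theta_inl]; simp⟩,
     ⟨Coprod.inr p.2, fun y => by rw [theta_inr]; simp⟩⟩⟩
  map_one' := by
    apply Subtype.ext
    apply MulEquiv.toMonoidHom_injective
    apply Coprod.hom_ext <;> ext z <;> simp
  map_mul' p q := by
    apply Subtype.ext
    apply MulEquiv.toMonoidHom_injective
    apply Coprod.hom_ext <;> ext z <;>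
      simp [mul_assoc, Subgroup.coe_mul, MulAut.mul_apply]

theorem main_iso [Nontrivial G₁] [Nontrivial G₂] :
    Nonempty
      ((conjRestrictingAuts G₁ G₂ ⧸
          (innAuts (Coprod G₁ G₂)).subgroupOf (conjRestrictingAuts G₁ G₂)) ≃*
        (G₁ ⧸ Subgroup.center G₁) × (G₂ ⧸ Subgroup.center G₂)) := by
  classical
  set N := (innAuts (Coprod G₁ G₂)).subgroupOf (conjRestrictingAuts G₁ G₂) with hN
  set Φ : G₁ × G₂ →* (conjRestrictingAuts G₁ G₂ ⧸ N) :=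
    (QuotientGroup.mk' N).comp (Phi0 (G₁ := G₁) (G₂ := G₂)) with hΦ
  set π : G₁ × G₂ →* (G₁ ⧸ Subgroup.center G₁) × (G₂ ⧸ Subgroup.center G₂) :=
    (QuotientGroup.mk' (Subgroup.center G₁)).prodMap (QuotientGroup.mk' (Subgroup.center G₂))
    with hπ
  letI : ∀ b, DecidableEq (Hf G₁ G₂ b) := fun _ => Classical.decEq _
  -- surjectivity of Φ
  have hΦsurj : Function.Surjective Φ := by
    intro q
    obtain ⟨⟨φ, hφ⟩, rfl⟩ := QuotientGroup.mk'_surjective N q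
    obtain ⟨⟨a, ha⟩, ⟨b, hb⟩⟩ := id hφ
    set c : Coprod G₁ G₂ := a⁻¹ * b with hc
    set c' := eIso G₁ G₂ c with hc'
    have hpsi : ∀ g, psiC c' g = eIso G₁ G₂ (a⁻¹ * φ ((eIso G₁ G₂).symm g) * a) := by
      intro g
      induction g using CoprodI.induction_on with
      | one => simp
      | of i z =>
        cases i
        · rw [psiC_of_false, eIso_symm_of_false, hb z, hc']
          simp only [map_mul, map_inv, eIso_inr, hc]
          group
        · rw [psiC_of_true, eIso_symm_of_true, ha z]
          simp only [map_mul, map_inv, eIso_inl]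
          group
      | mul x y hx hy =>
        rw [map_mul, hx, hy, ← map_mul (eIso G₁ G₂)]
        congr 1
        rw [map_mul ((eIso G₁ G₂).symm), map_mul φ]
        group
    have hsurj' : Function.Surjective (psiC c') := by
      intro g
      refine ⟨eIso G₁ G₂ (φ.symm (a * (eIso G₁ G₂).symm g * a⁻¹)), ?_⟩
      rw [hpsi, MulEquiv.symm_apply_apply, MulEquiv.apply_symm_apply φ,
        show a⁻¹ * (a * (eIso G₁ G₂).symm g * a⁻¹) * a = (eIso G₁ G₂).symm g by group,
        MulEquiv.apply_symm_apply]
    obtain ⟨y0, hy0⟩ := exists_ne (1 : G₂)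
    obtain ⟨g₁, g₂, hgg⟩ := conj_decomp (H := Hf G₁ G₂) ⟨y0, hy0⟩ (lenW c') c' le_rfl hsurj'
    have hgg' : ∀ y : G₂, c * Coprod.inr y * c⁻¹ =
        (Coprod.inl g₁ * Coprod.inr g₂) * Coprod.inr y *
          (Coprod.inl g₁ * Coprod.inr g₂)⁻¹ := by
      intro y
      apply (eIso G₁ G₂).injective
      have h := hgg y
      simp only [id_eq, map_mul, map_inv, eIso_inl, eIso_inr, ← hc']
      exact h
    have hphi_eq : ∀ z, φ z =
        (a * Coprod.inl (@id G₁ g₁)) * theta (@id G₁ g₁)⁻¹ (@id G₂ g₂) z * (a * Coprod.inl (@id G₁ g₁))⁻¹ := by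
      intro z
      induction z using Coprod.induction_on with
      | inl x =>
        rw [theta_inl, ha x]
        simp only [id_eq, map_mul, map_inv, mul_inv_rev, inv_inv]
        group
      | inr y =>
        rw [theta_inr, hb y]
        have hb2 : b = a * c := by rw [hc]; group
        have h := hgg' y
        rw [hb2, show a * c * Coprod.inr y * (a * c)⁻¹ =
          a * (c * Coprod.inr y * c⁻¹) * a⁻¹ by group, h]
        simp only [id_eq, map_mul, map_inv, mul_inv_rev, inv_inv]
        group
        try rfl
      | mul x y hx hy =>
        rw [map_mul, hx, hy, map_mul]
        group
    refine ⟨((@id G₁ g₁)⁻¹, (@id G₂ g₂)), ?_⟩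
    show QuotientGroup.mk (Phi0 ((@id G₁ g₁)⁻¹, (@id G₂ g₂))) = QuotientGroup.mk (⟨φ, hφ⟩ : conjRestrictingAuts G₁ G₂)
    rw [QuotientGroup.eq]
    rw [hN, Subgroup.mem_subgroupOf]
    set u : Coprod G₁ G₂ := a * Coprod.inl (@id G₁ g₁) with hu
    refine ⟨(theta (@id G₁ g₁)⁻¹ (@id G₂ g₂))⁻¹ u, ?_⟩
    have hcoe : (((Phi0 (G₁ := G₁) (G₂ := G₂) ((@id G₁ g₁)⁻¹, (@id G₂ g₂)))⁻¹ *
        (⟨φ, hφ⟩ : conjRestrictingAuts G₁ G₂) : conjRestrictingAuts G₁ G₂) : MulAut (Coprod G₁ G₂)) =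
        (theta (@id G₁ g₁)⁻¹ (@id G₂ g₂))⁻¹ * φ := rfl
    rw [hcoe]
    ext z
    rw [MulAut.conj_apply, MulAut.mul_apply]
    apply (theta (@id G₁ g₁)⁻¹ (@id G₂ g₂)).injective
    rw [MulAut.apply_inv_self, hphi_eq z]
    simp only [id_eq, map_mul, map_inv, MulAut.apply_inv_self]
  -- kernels agree
  have hker : Φ.ker = π.ker := by
    ext p
    obtain ⟨aa, bb⟩ := p
    simp only [MonoidHom.mem_ker]
    constructor
    · intro hp
      have hmem : (theta aa bb) ∈ innAuts (Coprod G₁ G₂) := by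
        have h0 : Phi0 (G₁ := G₁) (G₂ := G₂) (aa, bb) ∈ N := by
          rw [← QuotientGroup.eq_one_iff]
          exact hp
        rwa [hN, Subgroup.mem_subgroupOf] at h0
      obtain ⟨w, hw⟩ := hmem
      have h1 : ∀ x : G₁, w * Coprod.inl x = Coprod.inl (aa * x * aa⁻¹) * w := by
        intro x
        have h := congrArg (fun ψ : MulAut (Coprod G₁ G₂) => ψ (Coprod.inl x)) hw
        simp only [MulAut.conj_apply, theta_inl] at h
        rw [← h]
        group
      have h2 : ∀ y : G₂, w * Coprod.inr y = Coprod.inr (bb * y * bb⁻¹) * w := by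
        intro y
        have h := congrArg (fun ψ : MulAut (Coprod G₁ G₂) => ψ (Coprod.inr y)) hw
        simp only [MulAut.conj_apply, theta_inr] at h
        rw [← h]
        group
      have h1' : ∀ x : G₁, ∃ x' : G₁,
          (eIso G₁ G₂ w) * CoprodI.of (M := Hf G₁ G₂) (i := true) x =
            CoprodI.of (M := Hf G₁ G₂) (i := true) x' * (eIso G₁ G₂ w) := by
        intro x
        refine ⟨aa * x * aa⁻¹, ?_⟩
        have h := congrArg (eIso G₁ G₂) (h1 x)
        simpa only [map_mul, eIso_inl] using h
      have h2' : ∀ y : G₂, ∃ y' : G₂,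
          (eIso G₁ G₂ w) * CoprodI.of (M := Hf G₁ G₂) (i := false) y =
            CoprodI.of (M := Hf G₁ G₂) (i := false) y' * (eIso G₁ G₂ w) := by
        intro y
        refine ⟨bb * y * bb⁻¹, ?_⟩
        have h := congrArg (eIso G₁ G₂) (h2 y)
        simpa only [map_mul, eIso_inr] using h
      obtain ⟨x1, hx1⟩ := exists_ne (1 : G₁)
      obtain ⟨y1, hy1⟩ := exists_ne (1 : G₂)
      obtain ⟨u₁, hu₁⟩ := mem_of_of_conj (H := Hf G₁ G₂) (i := true) (j := false)
        (fun h => Bool.noConfusion h) ⟨x1, hx1⟩ (lenW (eIso G₁ G₂ w)) _ le_rfl h1'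
      obtain ⟨u₂, hu₂⟩ := mem_of_of_conj (H := Hf G₁ G₂) (i := false) (j := true)
        (fun h => Bool.noConfusion h) ⟨y1, hy1⟩ (lenW (eIso G₁ G₂ w)) _ le_rfl h2'
      have hw1 : w = Coprod.inl u₁ := by
        have h := congrArg (eIso G₁ G₂).symm hu₁
        rwa [MulEquiv.symm_apply_apply, eIso_symm_of_true] at h
      have hw2 : w = Coprod.inr u₂ := by
        have h := congrArg (eIso G₁ G₂).symm hu₂
        rwa [MulEquiv.symm_apply_apply, eIso_symm_of_false] at h
      have hu1 : u₁ = 1 := by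
        have h := congrArg Coprod.fst (hw1.symm.trans hw2)
        simpa using h
      have hwone : w = 1 := by rw [hw1, hu1, map_one]
      have hth : ∀ z, theta aa bb z = z := by
        intro z
        rw [← hw, hwone]
        simp
      have haa : aa ∈ Subgroup.center G₁ := by
        rw [Subgroup.mem_center_iff]
        intro g
        have h := hth (Coprod.inl g)
        rw [theta_inl] at h
        have h3 := Coprod.inl_injective h
        exact (mul_inv_eq_iff_eq_mul.mp h3).symm
      have hbb : bb ∈ Subgroup.center G₂ := by
        rw [Subgroup.mem_center_iff]
        intro g
        have h := hth (Coprod.inr g)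
        rw [theta_inr] at h
        have h3 := Coprod.inr_injective h
        exact (mul_inv_eq_iff_eq_mul.mp h3).symm
      have : π (aa, bb) = ((aa : G₁ ⧸ Subgroup.center G₁), (bb : G₂ ⧸ Subgroup.center G₂)) := rfl
      rw [this, Prod.ext_iff]
      exact ⟨(QuotientGroup.eq_one_iff aa).mpr haa, (QuotientGroup.eq_one_iff bb).mpr hbb⟩
    · intro hp
      have haa : aa ∈ Subgroup.center G₁ := by
        have h := congrArg Prod.fst hp
        exact (QuotientGroup.eq_one_iff aa).mp h
      have hbb : bb ∈ Subgroup.center G₂ := by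
        have h := congrArg Prod.snd hp
        exact (QuotientGroup.eq_one_iff bb).mp h
      show QuotientGroup.mk (Phi0 (aa, bb)) = 1
      rw [QuotientGroup.eq_one_iff]
      rw [hN, Subgroup.mem_subgroupOf]
      refine ⟨1, ?_⟩
      have hconj1 : MulAut.conj (1 : Coprod G₁ G₂) = 1 := map_one _
      rw [hconj1]
      ext z
      show z = theta aa bb z
      induction z using Coprod.induction_on with
      | inl x =>
        rw [theta_inl]
        have h := Subgroup.mem_center_iff.mp haa x
        rw [← h]
        group
      | inr y =>
        rw [theta_inr]
        have h := Subgroup.mem_center_iff.mp hbb y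
        rw [← h]
        group
      | mul x y hx hy =>
        rw [map_mul, ← hx, ← hy]
  have hπsurj : Function.Surjective π := by
    rw [hπ]
    have := Function.Surjective.prodMap (f := ⇑(QuotientGroup.mk' (Subgroup.center G₁)))
      (g := ⇑(QuotientGroup.mk' (Subgroup.center G₂)))
      (QuotientGroup.mk'_surjective _) (QuotientGroup.mk'_surjective _)
    exact this
  exact ⟨((QuotientGroup.quotientKerEquivOfSurjective Φ hΦsurj).symm.trans
    (QuotientGroup.quotientMulEquivOfEq hker)).trans
    (QuotientGroup.quotientKerEquivOfSurjective π hπsurj)⟩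

end Main

end OutAux


/-- For a free product `G = G₁ ∗ G₂` of two nontrivial groups, the group
`Out(G, {[G₁],[G₂]}^(t))` of outer automorphisms acting as an inner automorphism on each
factor is isomorphic to `(G₁/Z(G₁)) × (G₂/Z(G₂))`. -/
theorem out_t_free_product_two_factors [Nontrivial G₁] [Nontrivial G₂] :
    Nonempty
      ((conjRestrictingAuts G₁ G₂ ⧸
          (innAuts (Coprod G₁ G₂)).subgroupOf (conjRestrictingAuts G₁ G₂)) ≃*
        (G₁ ⧸ Subgroup.center G₁) × (G₂ ⧸ Subgroup.center G₂)) :=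
  OutAux.main_iso (G₁ := G₁) (G₂ := G₂)
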